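/- For all real numbers α and β, |(1+iα)/⁴√(1+α²) − (1+iβ)/⁴√(1+β²)| ≤ √2 · |α − β|. -/

import Mathlib

open Complex in
theorem complex_fourth_root_diff_le (α β : ℝ) :
    ‖(1 + α * I) / (((1 + α ^ 2) ^ ((1 : ℝ) / 4) : ℝ) : ℂ) -
      (1 + β * I) / (((1 + β ^ 2) ^ ((1 : ℝ) / 4) : ℝ) : ℂ)‖ ≤ Real.sqrt 2 * |α - β| := by
  set g : ℝ → ℂ := fun x => (1 + x * I) * (((1 + x ^ 2) ^ (-((1 : ℝ) / 4)) : ℝ) : ℂ) with hg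
  have hrw : ∀ x : ℝ, (1 + x * I) / (((1 + x ^ 2) ^ ((1 : ℝ) / 4) : ℝ) : ℂ) = g x := by
    intro x
    simp only [hg]
    rw [Real.rpow_neg (by positivity), Complex.ofReal_inv, div_eq_mul_inv]
  set g' : ℝ → ℂ := fun x => 1 * I * (((1 + x ^ 2) ^ (-((1 : ℝ) / 4)) : ℝ) : ℂ) +
      (1 + x * I) * ((2 * x ^ 1 * (-((1 : ℝ) / 4)) * (1 + x ^ 2) ^ (-((1 : ℝ) / 4) - 1) : ℝ) : ℂ)
    with hg'
  have hderiv : ∀ x : ℝ, HasDerivAt g (g' x) x := by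
    intro x
    have h1 : HasDerivAt (fun x : ℝ => 1 + x * I) (1 * I) x := by
      have := ((Complex.ofRealCLM.hasDerivAt (x := x)).mul_const I).const_add (1 : ℂ)
      simpa using this
    have h2 : HasDerivAt (fun x : ℝ => (1 + x ^ 2 : ℝ))
        (2 * x ^ 1) x := by
      simpa using (hasDerivAt_pow 2 x).const_add (1 : ℝ)
    have h3 := (h2.rpow_const (p := -((1:ℝ)/4)) (Or.inl (by positivity)))
    exact h1.mul h3.ofReal_comp
  have hbound : ∀ x : ℝ, ‖g' x‖ ≤ Real.sqrt 2 := by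
    intro x
    set c : ℝ := (1 + x ^ 2) ^ (-((1 : ℝ) / 4)) with hcdef
    have hc : 0 < c := by positivity
    have hc1 : c ≤ 1 := Real.rpow_le_one_of_one_le_of_nonpos (by nlinarith [sq_nonneg x]) (by norm_num)
    set e : ℝ := (1 + x ^ 2)⁻¹ with hedef
    have he : 0 < e := by positivity
    have hee : e * (1 + x ^ 2) = 1 := inv_mul_cancel₀ (by positivity)
    have hsplit : (1 + x ^ 2) ^ (-((1 : ℝ) / 4) - 1) = c * e := by
      rw [Real.rpow_sub (by positivity), Real.rpow_one, hcdef]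
      ring
    rw [Real.le_sqrt (norm_nonneg _)]
    rw [← Complex.normSq_eq_norm_sq, hg']
    simp only [hsplit, Complex.normSq_apply, Complex.add_re, Complex.add_im, Complex.mul_re,
      Complex.mul_im, Complex.one_re, Complex.one_im, Complex.I_re, Complex.I_im,
      Complex.ofReal_re, Complex.ofReal_im]
    ring_nf
    nlinarith [sq_nonneg x, sq_nonneg (x*c), sq_nonneg c, mul_pos hc he, sq_nonneg (c*e),
      mul_pos (mul_pos hc hc) he, sq_nonneg (x*c*e), hc.le, he.le,
      mul_le_one₀ hc1 he.le (by nlinarith : e ≤ 1)]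
    norm_num
  rw [hrw α, hrw β]
  have := convex_univ.norm_image_sub_le_of_norm_hasDerivWithin_le
    (f := g) (f' := g') (C := Real.sqrt 2)
    (fun x _ => (hderiv x).hasDerivWithinAt) (fun x _ => hbound x)
    (Set.mem_univ β) (Set.mem_univ α)
  simpa [Real.norm_eq_abs] using this
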